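/- Let R be a commutative ring and let h, j : ℕ → R be sequences with h 0 = 1 and j 1 = 1 satisfying equation (D1): n·h_n = Σ_{r=1}^{n} j_r · h_{n-r} for all n ≥ 1. For n ≥ 1 let J_n(j̄) be the n×n matrix over R whose entry in row i and column k (1 ≤ i,k ≤ n) equals j_{i-k+1} if k ≤ i, equals -(i·1_R) if k = i+1, and equals 0 if k > i+1. Then the constant term of the characteristic polynomial of J_n(j̄) equals (-1)^n · (n!) · h_n; equivalently, χ(J_n(j̄))(0) = (-1)^n · (n!) · h_n. -/

import Mathlib

open Polynomial

/-- The matrix `J_n(j̄)`: entries `j (i - k + 1)` in (1-based) row `i`, column `k` for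
`k ≤ i`, superdiagonal entry `-i` in row `i`, column `i + 1`, and `0` above the
superdiagonal. -/
def Jmat {R : Type*} [CommRing R] (j : ℕ → R) (n : ℕ) : Matrix (Fin n) (Fin n) R :=
  Matrix.of fun i k =>
    if (k : ℕ) ≤ (i : ℕ) then j ((i : ℕ) - (k : ℕ) + 1)
    else if (k : ℕ) = (i : ℕ) + 1 then -(((i : ℕ) + 1 : ℕ) : R)
    else 0

/-- The entries of `Jmat` as a function of the raw indices. -/
def Jent {R : Type*} [CommRing R] (j : ℕ → R) (a b : ℕ) : R :=
  if b ≤ a then j (a - b + 1) else if b = a + 1 then -((a + 1 : ℕ) : R) else 0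

lemma Jmat_apply {R : Type*} [CommRing R] (j : ℕ → R) (n : ℕ) (i k : Fin n) :
    Jmat j n i k = Jent j (i : ℕ) (k : ℕ) := rfl

lemma succAbove_val {n : ℕ} (k : Fin (n + 1)) (c : Fin n) :
    ((k.succAbove c : Fin (n + 1)) : ℕ) =
      if (c : ℕ) < (k : ℕ) then (c : ℕ) else (c : ℕ) + 1 := by
  rw [Fin.succAbove]
  split <;> rename_i hc
  · rw [if_pos]; · rfl
    · exact hc
  · rw [if_neg]; · rfl
    · exact fun hlt => hc hlt

lemma fact_prod (c N : ℕ) (hc : c ≤ N) :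
    c.factorial * ∏ i ∈ Finset.Ico c N, (i + 1) = N.factorial := by
  induction N with
  | zero => interval_cases c; simp
  | succ M ih =>
    rcases Nat.lt_or_ge c (M + 1) with hlt | hge
    · have hcM : c ≤ M := Nat.lt_succ_iff.mp hlt
      rw [Finset.prod_Ico_succ_top hcM, ← mul_assoc, ih hcM, Nat.factorial_succ, mul_comm]
    · have : c = M + 1 := le_antisymm hc hge
      subst this; simp

lemma Jmat_minor_det {R : Type*} [CommRing R] (j : ℕ → R) :
    ∀ (N : ℕ) (k : Fin (N + 1)),
      ((Jmat j (N + 1)).submatrix Fin.castSucc k.succAbove).det =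
        (∏ i ∈ Finset.Ico (k : ℕ) N, (-((i + 1 : ℕ) : R))) * (Jmat j (k : ℕ)).det := by
  intro N
  induction N with
  | zero =>
    intro k
    fin_cases k
    simp [Matrix.det_fin_zero]
  | succ M ih =>
    intro k
    by_cases hk : k = Fin.last (M + 1)
    · subst hk
      rw [Fin.succAbove_last]
      have hsub : ((Jmat j (M + 2)).submatrix Fin.castSucc Fin.castSucc) = Jmat j (M + 1) := by
        ext i c
        rw [Matrix.submatrix_apply, Jmat_apply, Jmat_apply, Fin.coe_castSucc, Fin.coe_castSucc]
      rw [hsub]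
      simp
    · have hkM : (k : ℕ) ≤ M := Nat.lt_succ_iff.mp (Fin.val_lt_last hk)
      set B := (Jmat j (M + 2)).submatrix Fin.castSucc k.succAbove with hB
      rw [Matrix.det_succ_column B (Fin.last M)]
      rw [Finset.sum_eq_single (Fin.last M)]
      · have hBentry : B (Fin.last M) (Fin.last M) = -((M + 1 : ℕ) : R) := by
          rw [hB, Matrix.submatrix_apply, Jmat_apply, succAbove_val, Fin.val_last,
            if_neg (by omega : ¬ M < (k : ℕ)), Jent, Fin.coe_castSucc, Fin.val_last,
            if_neg (by omega), if_pos rfl]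
        rw [hBentry, Fin.succAbove_last]
        have hk' : (k : ℕ) < M + 1 := Nat.lt_succ_of_le hkM
        set k' : Fin (M + 1) := ⟨(k : ℕ), hk'⟩ with hk'def
        have hsub2 : B.submatrix Fin.castSucc Fin.castSucc =
            (Jmat j (M + 1)).submatrix Fin.castSucc k'.succAbove := by
          ext i c
          rw [Matrix.submatrix_apply, Matrix.submatrix_apply, hB, Matrix.submatrix_apply,
            Jmat_apply, Jmat_apply]
          have h2 : ((k.succAbove (Fin.castSucc c)) : ℕ) = ((k'.succAbove c) : ℕ) := by
            rw [succAbove_val, succAbove_val, Fin.coe_castSucc]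
          rw [h2]
          rfl
        rw [hsub2, ih k']
        have hval : (k' : ℕ) = (k : ℕ) := rfl
        rw [hval]
        have hprod : ∏ i ∈ Finset.Ico (k : ℕ) (M + 1), (-((i + 1 : ℕ) : R)) =
            (∏ i ∈ Finset.Ico (k : ℕ) M, (-((i + 1 : ℕ) : R))) * (-((M + 1 : ℕ) : R)) := by
          rw [Finset.prod_Ico_succ_top hkM]
        have hsign : (-1 : R) ^ (((Fin.last M : Fin (M+1)) : ℕ) + ((Fin.last M : Fin (M+1)) : ℕ)) = 1 := by
          rw [Fin.val_last, ← two_mul, pow_mul]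
          norm_num
        rw [hprod, hsign]
        ring
      · intro i _ hi
        have hi' : (i : ℕ) < M := by
          rcases Nat.lt_or_ge (i : ℕ) M with h | h
          · exact h
          · have : (i : ℕ) = M := le_antisymm (Nat.lt_succ_iff.mp i.isLt) h
            exact absurd (Fin.ext (by rw [this, Fin.val_last])) hi
        have hBz : B i (Fin.last M) = 0 := by
          rw [hB, Matrix.submatrix_apply, Jmat_apply, succAbove_val, Fin.val_last,
            if_neg (by omega : ¬ M < (k : ℕ)), Jent, Fin.coe_castSucc,
            if_neg (by omega), if_neg (by omega)]
        rw [hBz]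
        ring
      · intro habs
        exact absurd (Finset.mem_univ _) habs

lemma det_Jmat {R : Type*} [CommRing R] (h j : ℕ → R) (h0 : h 0 = 1)
    (hD : ∀ n : ℕ, 1 ≤ n → n • h n = ∑ r ∈ Finset.Icc 1 n, j r * h (n - r)) :
    ∀ N : ℕ, (Jmat j N).det = N.factorial • h N := by
  intro N
  induction N using Nat.strong_induction_on with
  | _ N ih =>
    match N with
    | 0 =>
      rw [Matrix.det_fin_zero, Nat.factorial_zero, h0, one_smul]
    | (M + 1) =>
      rw [Matrix.det_succ_row (Jmat j (M + 1)) (Fin.last M)]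
      have hterm : ∀ c : Fin (M + 1),
          (-1 : R) ^ (((Fin.last M : Fin (M+1)) : ℕ) + (c : ℕ)) * Jmat j (M + 1) (Fin.last M) c *
            ((Jmat j (M + 1)).submatrix (Fin.last M).succAbove c.succAbove).det =
          (M.factorial : R) * (j (M - (c : ℕ) + 1) * h (c : ℕ)) := by
        intro c
        have hcM : (c : ℕ) ≤ M := Nat.lt_succ_iff.mp c.isLt
        rw [Fin.succAbove_last, Jmat_minor_det j M c, ih (c : ℕ) c.isLt]
        have hentry : Jmat j (M + 1) (Fin.last M) c = j (M - (c : ℕ) + 1) := by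
          rw [Jmat_apply, Jent, Fin.val_last, if_pos hcM]
        rw [hentry]
        have hprodneg : (∏ i ∈ Finset.Ico (c : ℕ) M, (-((i + 1 : ℕ) : R))) =
            (-1 : R) ^ (M - (c : ℕ)) * ((∏ i ∈ Finset.Ico (c : ℕ) M, (i + 1) : ℕ) : R) := by
          rw [Nat.cast_prod]
          rw [show (∏ i ∈ Finset.Ico (c : ℕ) M, (-((i + 1 : ℕ) : R))) =
              ∏ i ∈ Finset.Ico (c : ℕ) M, ((-1 : R) * ((i + 1 : ℕ) : R)) by
            exact Finset.prod_congr rfl fun i _ => by ring]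
          rw [Finset.prod_mul_distrib, Finset.prod_const, Nat.card_Ico]
        rw [hprodneg]
        have hsign : (-1 : R) ^ (((Fin.last M : Fin (M+1)) : ℕ) + (c : ℕ)) *
            (-1 : R) ^ (M - (c : ℕ)) = 1 := by
          rw [Fin.val_last, ← pow_add, show M + (c : ℕ) + (M - (c : ℕ)) = 2 * M by omega,
            pow_mul]
          norm_num
        have hfact : ((∏ i ∈ Finset.Ico (c : ℕ) M, (i + 1) : ℕ) : R) * ((c : ℕ).factorial : R) =
            (M.factorial : R) := by
          rw [← Nat.cast_mul, mul_comm, fact_prod (c : ℕ) M hcM]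
        calc (-1 : R) ^ (((Fin.last M : Fin (M+1)) : ℕ) + (c : ℕ)) * j (M - (c : ℕ) + 1) *
              ((-1 : R) ^ (M - (c : ℕ)) * ((∏ i ∈ Finset.Ico (c : ℕ) M, (i + 1) : ℕ) : R) *
                ((c : ℕ).factorial • h (c : ℕ)))
            = ((-1 : R) ^ (((Fin.last M : Fin (M+1)) : ℕ) + (c : ℕ)) * (-1 : R) ^ (M - (c : ℕ))) *
              (((∏ i ∈ Finset.Ico (c : ℕ) M, (i + 1) : ℕ) : R) * (((c : ℕ).factorial : R))) *
              (j (M - (c : ℕ) + 1) * h (c : ℕ)) := by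
              rw [nsmul_eq_mul]; ring
          _ = (M.factorial : R) * (j (M - (c : ℕ) + 1) * h (c : ℕ)) := by
              rw [hsign, hfact, one_mul]
      rw [Finset.sum_congr rfl fun c _ => hterm c, ← Finset.mul_sum]
      have hsum : (∑ c : Fin (M + 1), j (M - (c : ℕ) + 1) * h (c : ℕ)) =
          ∑ r ∈ Finset.Icc 1 (M + 1), j r * h (M + 1 - r) := by
        rw [Fin.sum_univ_eq_sum_range (fun i => j (M - i + 1) * h i) (M + 1)]
        have hR : ∑ r ∈ Finset.Icc 1 (M + 1), j r * h (M + 1 - r) =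
            ∑ i ∈ Finset.range (M + 1), j (1 + i) * h (M - i) := by
          rw [show Finset.Icc 1 (M + 1) = Finset.Ico 1 (M + 2) by
              exact (Finset.Ico_add_one_right_eq_Icc 1 (M + 1)).symm, Finset.sum_Ico_eq_sum_range]
          refine Finset.sum_congr (by norm_num) fun i hi => ?_
          have : M + 1 - (1 + i) = M - i := by omega
          rw [this]
        rw [hR, ← Finset.sum_range_reflect (fun i => j (1 + i) * h (M - i)) (M + 1)]
        refine Finset.sum_congr rfl fun i hi => ?_
        have hi' : i ≤ M := Nat.lt_succ_iff.mp (Finset.mem_range.mp hi)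
        have e1 : M + 1 - 1 - i = M - i := by omega
        have e2 : 1 + (M - i) = M - i + 1 := by omega
        have e3 : M - (M - i) = i := by omega
        rw [e1, e2, e3]
      rw [hsum, ← hD (M + 1) (Nat.le_add_left 1 M), nsmul_eq_mul, nsmul_eq_mul,
        Nat.factorial_succ]
      push_cast
      ring


/-- If `h 0 = 1`, `j 1 = 1` and (D1) holds, then the constant term of the characteristic
polynomial of `J_n(j̄)` equals `(-1)^n * n! • h n`; equivalently, evaluating the
characteristic polynomial at `0` gives `(-1)^n * n! • h n`. -/
theorem charpoly_constantTerm_Jmat {R : Type*} [CommRing R] (h j : ℕ → R)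
    (h0 : h 0 = 1) (j1 : j 1 = 1)
    (hD : ∀ n : ℕ, 1 ≤ n → n • h n = ∑ r ∈ Finset.Icc 1 n, j r * h (n - r))
    (n : ℕ) (hn : 1 ≤ n) :
    ((Jmat j n).charpoly).coeff 0 = (-1 : R) ^ n * n.factorial • h n ∧
      ((Jmat j n).charpoly).eval 0 = (-1 : R) ^ n * n.factorial • h n := by
  have hdet := Matrix.det_eq_sign_charpoly_coeff (Jmat j n)
  rw [Fintype.card_fin, det_Jmat h j h0 hD n] at hdet
  have hcoeff : ((Jmat j n).charpoly).coeff 0 = (-1 : R) ^ n * n.factorial • h n := by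
    have : (-1 : R) ^ n * ((-1 : R) ^ n * ((Jmat j n).charpoly).coeff 0) =
        (-1 : R) ^ n * (n.factorial • h n) := by rw [← hdet]
    rwa [← mul_assoc, ← pow_add, ← two_mul, pow_mul, neg_one_sq, one_pow, one_mul] at this
  exact ⟨hcoeff, by rw [← Polynomial.coeff_zero_eq_eval_zero, hcoeff]⟩
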